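/- Let p, q be real numbers with p - q > 1 and p, q ≥ 0, let N, d ∈ ℕ with d ≥ 1, and let W_1(k) = k^p + 1, W_2(k) = k^q + 1. Let (φ_n)_{n≥0} be any sequence in ℤ^d with the flow property: |Σ_j φ_n(j)| ≤ N for all n, and at each step exactly one positive coordinate increments by 1, one nonpositive coordinate decrements by 1, and all others stay fixed. Define Υ^+(φ_n) = Σ_{j: φ_n(j)>0} W_1(φ_n(j)) and Υ^-(φ_n) = Σ_{j: φ_n(j)≤0} W_2(-φ_n(j)). Then Σ_{n=0}^∞ Υ^-(φ_n)/Υ^+(φ_n) < ∞, with a bound depending only on p, q, N, d. -/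
import Mathlib


/-- The flow property of admissible crossing-number evolutions. -/
def IsFlowSeq (N d : ℕ) (φ : ℕ → Fin d → ℤ) : Prop :=
  (∀ n, |∑ j, φ n j| ≤ (N : ℤ)) ∧
  ∀ n, ∃ j₁ j₂ : Fin d, j₁ ≠ j₂ ∧
    0 < φ n j₁ ∧ φ (n + 1) j₁ = φ n j₁ + 1 ∧
    φ n j₂ ≤ 0 ∧ φ (n + 1) j₂ = φ n j₂ - 1 ∧
    ∀ j, j ≠ j₁ → j ≠ j₂ → φ (n + 1) j = φ n j

private lemma flow_pos_filter_eq {N d : ℕ} {φ : ℕ → Fin d → ℤ} (h : IsFlowSeq N d φ) (n : ℕ) :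
    Finset.univ.filter (fun j => 0 < φ (n + 1) j) =
      Finset.univ.filter (fun j => 0 < φ n j) := by
  obtain ⟨j₁, j₂, hne, h1, e1, h2, e2, hrest⟩ := h.2 n
  ext j
  simp only [Finset.mem_filter, Finset.mem_univ, true_and]
  by_cases hj1 : j = j₁
  · subst hj1; rw [e1]; omega
  by_cases hj2 : j = j₂
  · subst hj2; rw [e2]; omega
  · rw [hrest j hj1 hj2]

private lemma flow_sum_pos {N d : ℕ} {φ : ℕ → Fin d → ℤ} (h : IsFlowSeq N d φ) (n : ℕ) :
    ∑ j ∈ Finset.univ.filter (fun j => 0 < φ n j), φ n j =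
      (∑ j ∈ Finset.univ.filter (fun j => 0 < φ 0 j), φ 0 j) + n := by
  induction n with
  | zero => simp
  | succ n ih =>
    rw [flow_pos_filter_eq h n]
    obtain ⟨j₁, j₂, hne, h1, e1, h2, e2, hrest⟩ := h.2 n
    have hmem : j₁ ∈ Finset.univ.filter (fun j => 0 < φ n j) := by
      simp [h1]
    have key : ∑ j ∈ Finset.univ.filter (fun j => 0 < φ n j), (φ (n + 1) j - φ n j) = 1 := by
      rw [Finset.sum_eq_single j₁]
      · rw [e1]; ring
      · intro j hj hne1
        by_cases hj2 : j = j₂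
        · exfalso
          subst hj2
          simp only [Finset.mem_filter, Finset.mem_univ, true_and] at hj
          omega
        · rw [hrest j hne1 hj2]; ring
      · intro habs; exact absurd hmem habs
    rw [Finset.sum_sub_distrib] at key
    push_cast
    omega

private lemma flow_sum_pos_ge_one {N d : ℕ} {φ : ℕ → Fin d → ℤ} (h : IsFlowSeq N d φ) (n : ℕ) :
    1 ≤ ∑ j ∈ Finset.univ.filter (fun j => 0 < φ n j), φ n j := by
  obtain ⟨j₁, j₂, hne, h1, e1, h2, e2, hrest⟩ := h.2 n
  have hmem : j₁ ∈ Finset.univ.filter (fun j => 0 < φ n j) := by simp [h1]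
  calc (1 : ℤ) ≤ φ n j₁ := h1
    _ ≤ ∑ j ∈ Finset.univ.filter (fun j => 0 < φ n j), φ n j := by
        refine Finset.single_le_sum (fun j hj => ?_) hmem
        simp only [Finset.mem_filter, Finset.mem_univ, true_and] at hj
        omega

theorem stmt_14 (p q : ℝ) (hp : 0 ≤ p) (hq : 0 ≤ q) (hpq : 1 < p - q)
    (N d : ℕ) (hd : 1 ≤ d) :
    ∃ B : ℝ, ∀ φ : ℕ → Fin d → ℤ, IsFlowSeq N d φ →
      Summable (fun n : ℕ =>
        (∑ j ∈ Finset.univ.filter (fun j => φ n j ≤ 0), (((-φ n j : ℤ) : ℝ) ^ q + 1)) /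
        (∑ j ∈ Finset.univ.filter (fun j => 0 < φ n j), (((φ n j : ℤ) : ℝ) ^ p + 1))) ∧
      (∑' n : ℕ,
        (∑ j ∈ Finset.univ.filter (fun j => φ n j ≤ 0), (((-φ n j : ℤ) : ℝ) ^ q + 1)) /
        (∑ j ∈ Finset.univ.filter (fun j => 0 < φ n j), (((φ n j : ℤ) : ℝ) ^ p + 1))) ≤ B := by
  have hd0 : (0 : ℝ) < (d : ℝ) := by exact_mod_cast hd
  -- the constant
  set C : ℝ := (d : ℝ) * (((N : ℝ) + 1) ^ q + 1) * (d : ℝ) ^ p with hC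
  have hC0 : 0 ≤ C := by
    have h1 : (0 : ℝ) ≤ ((N : ℝ) + 1) ^ q := Real.rpow_nonneg (by positivity) q
    have h2 : (0 : ℝ) ≤ (d : ℝ) ^ p := Real.rpow_nonneg hd0.le p
    positivity
  -- the comparison series
  have hg : Summable (fun n : ℕ => ((n : ℝ) + 1) ^ (q - p)) := by
    have := (summable_nat_add_iff (f := fun n : ℕ => (n : ℝ) ^ (q - p)) 1).2
      (Real.summable_nat_rpow.2 (by linarith))
    refine this.congr fun n => ?_
    push_cast
    ring_nf
  refine ⟨C * ∑' n : ℕ, ((n : ℝ) + 1) ^ (q - p), fun φ hφ => ?_⟩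
  set f : ℕ → ℝ := fun n =>
    (∑ j ∈ Finset.univ.filter (fun j => φ n j ≤ 0), (((-φ n j : ℤ) : ℝ) ^ q + 1)) /
    (∑ j ∈ Finset.univ.filter (fun j => 0 < φ n j), (((φ n j : ℤ) : ℝ) ^ p + 1)) with hf
  have hf0 : ∀ n, 0 ≤ f n := by
    intro n
    apply div_nonneg
    · refine Finset.sum_nonneg fun j hj => ?_
      simp only [Finset.mem_filter, Finset.mem_univ, true_and] at hj
      have : (0 : ℝ) ≤ ((-φ n j : ℤ) : ℝ) := by exact_mod_cast neg_nonneg.2 hj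
      positivity
    · refine Finset.sum_nonneg fun j hj => ?_
      simp only [Finset.mem_filter, Finset.mem_univ, true_and] at hj
      have : (0 : ℝ) ≤ ((φ n j : ℤ) : ℝ) := by exact_mod_cast hj.le
      positivity
  -- the main pointwise bound
  have hmain : ∀ n, f n ≤ C * ((n : ℝ) + 1) ^ (q - p) := by
    intro n
    -- the positive part sum
    set SZ : ℤ := ∑ j ∈ Finset.univ.filter (fun j => 0 < φ n j), φ n j with hSZ
    have hSn : SZ = (∑ j ∈ Finset.univ.filter (fun j => 0 < φ 0 j), φ 0 j) + n :=
      flow_sum_pos hφ n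
    have hS0 : 1 ≤ ∑ j ∈ Finset.univ.filter (fun j => 0 < φ 0 j), φ 0 j :=
      flow_sum_pos_ge_one hφ 0
    have hSge : (n : ℤ) + 1 ≤ SZ := by omega
    set S : ℝ := (SZ : ℝ) with hSr
    have hSge' : (n : ℝ) + 1 ≤ S := by rw [hSr]; exact_mod_cast hSge
    have hS1 : (1 : ℝ) ≤ S := by
      have : (0 : ℝ) ≤ (n : ℝ) := Nat.cast_nonneg n
      linarith
    have hSpos : (0 : ℝ) < S := lt_of_lt_of_le one_pos hS1
    -- negative part sum
    set TZ : ℤ := ∑ j ∈ Finset.univ.filter (fun j => φ n j ≤ 0), (-φ n j) with hTZ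
    have hT0 : (0 : ℤ) ≤ TZ := by
      refine Finset.sum_nonneg fun j hj => ?_
      simp only [Finset.mem_filter, Finset.mem_univ, true_and] at hj
      omega
    have hTS : TZ ≤ SZ + N := by
      have hsplit : (∑ j ∈ Finset.univ.filter (fun j => 0 < φ n j), φ n j) +
          (∑ j ∈ Finset.univ.filter (fun j => ¬ 0 < φ n j), φ n j) = ∑ j, φ n j :=
        Finset.sum_filter_add_sum_filter_not _ _ _
      have hfe : Finset.univ.filter (fun j => φ n j ≤ 0) =
          Finset.univ.filter (fun j => ¬ 0 < φ n j) := by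
        apply Finset.filter_congr
        intro j _
        simp [not_lt]
      have habs := hφ.1 n
      have h2 : TZ = -(∑ j ∈ Finset.univ.filter (fun j => ¬ 0 < φ n j), φ n j) := by
        rw [hTZ, hfe, Finset.sum_neg_distrib]
      rw [abs_le] at habs
      omega
    set T : ℝ := (TZ : ℝ) with hTr
    have hT0' : (0 : ℝ) ≤ T := by rw [hTr]; exact_mod_cast hT0
    have hTS' : T ≤ S + N := by rw [hTr, hSr]; exact_mod_cast hTS
    -- bound numerator
    have hnum : (∑ j ∈ Finset.univ.filter (fun j => φ n j ≤ 0), (((-φ n j : ℤ) : ℝ) ^ q + 1))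
        ≤ (d : ℝ) * (T ^ q + 1) := by
      calc (∑ j ∈ Finset.univ.filter (fun j => φ n j ≤ 0), (((-φ n j : ℤ) : ℝ) ^ q + 1))
          ≤ ∑ _j ∈ Finset.univ.filter (fun j => φ n j ≤ 0), (T ^ q + 1) := by
            refine Finset.sum_le_sum fun j hj => ?_
            simp only [Finset.mem_filter, Finset.mem_univ, true_and] at hj
            have h1 : (0 : ℝ) ≤ ((-φ n j : ℤ) : ℝ) := by exact_mod_cast neg_nonneg.2 hj
            have h2 : ((-φ n j : ℤ) : ℝ) ≤ T := by
              have : (-φ n j) ≤ TZ := by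
                refine Finset.single_le_sum (f := fun k => -φ n k) (fun k hk => ?_)
                  (Finset.mem_filter.2 ⟨Finset.mem_univ j, hj⟩)
                simp only [Finset.mem_filter, Finset.mem_univ, true_and] at hk
                show (0 : ℤ) ≤ -φ n k
                omega
              rw [hTr]
              exact_mod_cast this
            have := Real.rpow_le_rpow h1 h2 hq
            linarith
        _ = ((Finset.univ.filter (fun j => φ n j ≤ 0)).card : ℝ) * (T ^ q + 1) := by
            rw [Finset.sum_const, nsmul_eq_mul]
        _ ≤ (d : ℝ) * (T ^ q + 1) := by
            have hcard : ((Finset.univ.filter (fun j => φ n j ≤ 0)).card : ℝ) ≤ (d : ℝ) := by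
              exact_mod_cast (Finset.card_filter_le _ _).trans (by simp)
            have hTq : (0 : ℝ) ≤ T ^ q + 1 := by
              have := Real.rpow_nonneg hT0' q; linarith
            exact mul_le_mul_of_nonneg_right hcard hTq
    -- bound denominator from below
    have hden : (S / d) ^ p ≤
        (∑ j ∈ Finset.univ.filter (fun j => 0 < φ n j), (((φ n j : ℤ) : ℝ) ^ p + 1)) := by
      obtain ⟨j₁, j₂, hne, h1, _⟩ := hφ.2 n
      have hne' : (Finset.univ.filter (fun j => 0 < φ n j)).Nonempty := ⟨j₁, by simp [h1]⟩
      obtain ⟨j₀, hj₀, hmax⟩ := Finset.exists_max_image _ (φ n) hne'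
      have hj₀pos : 0 < φ n j₀ := by
        simpa using (Finset.mem_filter.1 hj₀).2
      have hSle : SZ ≤ (d : ℤ) * φ n j₀ := by
        calc SZ ≤ ∑ _j ∈ Finset.univ.filter (fun j => 0 < φ n j), φ n j₀ :=
              Finset.sum_le_sum fun j hj => hmax j hj
          _ = ((Finset.univ.filter (fun j => 0 < φ n j)).card : ℤ) * φ n j₀ := by
              rw [Finset.sum_const, nsmul_eq_mul]
          _ ≤ (d : ℤ) * φ n j₀ := by
              have hcard : ((Finset.univ.filter (fun j => 0 < φ n j)).card : ℤ) ≤ (d : ℤ) := by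
                exact_mod_cast (Finset.card_filter_le _ _).trans (by simp)
              exact mul_le_mul_of_nonneg_right hcard hj₀pos.le
      have hSd : S / d ≤ ((φ n j₀ : ℤ) : ℝ) := by
        rw [div_le_iff₀ hd0, hSr]
        have : ((SZ : ℤ) : ℝ) ≤ (d : ℝ) * ((φ n j₀ : ℤ) : ℝ) := by exact_mod_cast hSle
        linarith
      have hSd0 : (0 : ℝ) ≤ S / d := by positivity
      calc (S / d) ^ p ≤ ((φ n j₀ : ℤ) : ℝ) ^ p := Real.rpow_le_rpow hSd0 hSd hp
        _ ≤ ((φ n j₀ : ℤ) : ℝ) ^ p + 1 := by linarith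
        _ ≤ ∑ j ∈ Finset.univ.filter (fun j => 0 < φ n j), (((φ n j : ℤ) : ℝ) ^ p + 1) := by
            refine Finset.single_le_sum (f := fun j => ((φ n j : ℤ) : ℝ) ^ p + 1) (fun j hj => ?_) hj₀
            simp only [Finset.mem_filter, Finset.mem_univ, true_and] at hj
            have : (0 : ℝ) ≤ ((φ n j : ℤ) : ℝ) := by exact_mod_cast hj.le
            positivity
    have hSdp_pos : (0 : ℝ) < (S / d) ^ p := Real.rpow_pos_of_pos (by positivity) p
    -- combine
    have hstep1 : f n ≤ ((d : ℝ) * (T ^ q + 1)) / ((S / d) ^ p) := by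
      rw [hf]
      refine div_le_div₀ ?_ hnum hSdp_pos hden
      have hTq : (0 : ℝ) ≤ T ^ q := Real.rpow_nonneg hT0' q
      positivity
    -- T^q + 1 ≤ ((N+1)^q + 1) * S^q
    have hTq : T ^ q + 1 ≤ (((N : ℝ) + 1) ^ q + 1) * S ^ q := by
      have h1 : T ^ q ≤ (((N : ℝ) + 1) * S) ^ q := by
        refine Real.rpow_le_rpow hT0' ?_ hq
        have : (S : ℝ) + N ≤ ((N : ℝ) + 1) * S := by nlinarith [Nat.cast_nonneg (α := ℝ) N]
        linarith
      have h2 : (((N : ℝ) + 1) * S) ^ q = ((N : ℝ) + 1) ^ q * S ^ q :=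
        Real.mul_rpow (by positivity) hSpos.le
      have h3 : (1 : ℝ) ≤ S ^ q := Real.one_le_rpow hS1 hq
      nlinarith [Real.rpow_nonneg (show (0:ℝ) ≤ (N : ℝ) + 1 by positivity) q]
    have hSq_pos : (0 : ℝ) < S ^ q := Real.rpow_pos_of_pos hSpos q
    have hSp_pos : (0 : ℝ) < S ^ p := Real.rpow_pos_of_pos hSpos p
    have hdiveq : (S / d) ^ p = S ^ p / (d : ℝ) ^ p := Real.div_rpow hSpos.le hd0.le p
    have hstep2 : ((d : ℝ) * (T ^ q + 1)) / ((S / d) ^ p) ≤ C * S ^ (q - p) := by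
      rw [hdiveq, div_div_eq_mul_div, div_le_iff₀ hSp_pos]
      have hrw : S ^ (q - p) * S ^ p = S ^ q := by
        rw [← Real.rpow_add hSpos]; ring_nf
      have hdp : (0 : ℝ) < (d : ℝ) ^ p := Real.rpow_pos_of_pos hd0 p
      calc (d : ℝ) * (T ^ q + 1) * (d : ℝ) ^ p
          ≤ (d : ℝ) * ((((N : ℝ) + 1) ^ q + 1) * S ^ q) * (d : ℝ) ^ p := by
            have := mul_le_mul_of_nonneg_left hTq hd0.le
            exact mul_le_mul_of_nonneg_right this hdp.le
        _ = C * S ^ (q - p) * S ^ p := by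
            rw [hC, mul_assoc _ (S ^ (q - p)) (S ^ p), hrw]; ring
    have hstep3 : S ^ (q - p) ≤ ((n : ℝ) + 1) ^ (q - p) :=
      Real.rpow_le_rpow_of_nonpos (by positivity) hSge' (by linarith)
    calc f n ≤ ((d : ℝ) * (T ^ q + 1)) / ((S / d) ^ p) := hstep1
      _ ≤ C * S ^ (q - p) := hstep2
      _ ≤ C * ((n : ℝ) + 1) ^ (q - p) := mul_le_mul_of_nonneg_left hstep3 hC0
  have hgC : Summable (fun n : ℕ => C * ((n : ℝ) + 1) ^ (q - p)) := hg.mul_left C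
  have hfs : Summable f := Summable.of_nonneg_of_le hf0 hmain hgC
  refine ⟨hfs, ?_⟩
  calc (∑' n, f n) ≤ ∑' (n : ℕ), C * ((n : ℝ) + 1) ^ (q - p) := Summable.tsum_le_tsum hmain hfs hgC
    _ = C * ∑' (n : ℕ), ((n : ℝ) + 1) ^ (q - p) := tsum_mul_left
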